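/- Let L be an intermediate field of K(t)/K(f) with partition P_L = {P^{(1)}, …, P^{(s)}}, numbered so that 1 ∈ P^{(1)} (recall F_1 = x − t). Then the P_L-product g := ∏_{j∈P^{(1)}} F_j ∈ L[x] is the minimal polynomial of t over L. -/
import Mathlib


open Polynomial

/-- `Φ_f(x) := f_n(x) − f(t)·f_d(x) ∈ K(t)[x]`, where `f = f_n/f_d` with `f_n, f_d` coprime. -/
noncomputable def Phi {K : Type*} [Field K] (g : RatFunc K) : Polynomial (RatFunc K) :=
  g.num.map (algebraMap K (RatFunc K)) - Polynomial.C g * (g.denom.map (algebraMap K (RatFunc K)))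

/-- A rational function is nonconstant if it is not of the form `C c`. -/
def Nonconst {K : Type*} [Field K] (g : RatFunc K) : Prop := ∀ c : K, g ≠ RatFunc.C c

/-- All the `P`-products `∏_{j ∈ A} F_j`, for `A` a part of the partition `P`, have all
their coefficients in the set `L`. -/
def ProdsIn {K : Type*} [Field K] {r : ℕ} (F : Fin r → Polynomial (RatFunc K))
    (L : Set (RatFunc K)) (P : Finpartition (Finset.univ : Finset (Fin r))) : Prop :=
  ∀ A ∈ P.parts, ∀ m, (∏ j ∈ A, F j).coeff m ∈ L

/-- `P` is the partition of the intermediate field `L`: all its products lie in `L[x]`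
and its number of parts is maximal with this property. -/
def IsPartitionOf {K : Type*} [Field K] {r : ℕ} (F : Fin r → Polynomial (RatFunc K))
    (L : Set (RatFunc K)) (P : Finpartition (Finset.univ : Finset (Fin r))) : Prop :=
  ProdsIn F L P ∧
    ∀ Q : Finpartition (Finset.univ : Finset (Fin r)),
      ProdsIn F L Q → Q.parts.card ≤ P.parts.card

lemma aux_dvd_prod {Fld : Type*} [Field Fld] {ι : Type*} [DecidableEq ι]
    {F : ι → Polynomial Fld} (hFm : ∀ j, (F j).Monic) (hFirr : ∀ j, Irreducible (F j)) :
    ∀ (A : Finset ι) (M : Polynomial Fld), M.Monic → Squarefree (∏ j ∈ A, F j) →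
      M ∣ ∏ j ∈ A, F j → ∃ B ⊆ A, M = ∏ j ∈ B, F j := by
  intro A
  induction A using Finset.induction_on with
  | empty =>
    intro M hM _ hdvd
    refine ⟨∅, Finset.Subset.refl _, ?_⟩
    simpa using hM.eq_one_of_isUnit (isUnit_of_dvd_one (by simpa using hdvd))
  | @insert a s ha ih =>
    intro M hM hsq hdvd
    rw [Finset.prod_insert ha] at hsq hdvd
    by_cases h : F a ∣ M
    · obtain ⟨M', rfl⟩ := h
      have hM' : M'.Monic := (hFm a).of_mul_monic_left hM
      have h2 : M' ∣ ∏ j ∈ s, F j :=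
        (mul_dvd_mul_iff_left ((hFm a).ne_zero)).mp hdvd
      obtain ⟨B, hBs, hMB⟩ := ih M' hM' hsq.of_mul_right h2
      have haB : a ∉ B := fun hx => ha (hBs hx)
      exact ⟨insert a B, Finset.insert_subset_insert a hBs,
        by rw [Finset.prod_insert haB, hMB]⟩
    · have hcop : IsCoprime (F a) M := (hFirr a).coprime_iff_not_dvd.mpr h
      have h2 : M ∣ ∏ j ∈ s, F j := hcop.symm.dvd_of_dvd_mul_left hdvd
      obtain ⟨B, hBs, hMB⟩ := ih M hM hsq.of_mul_right h2
      exact ⟨B, hBs.trans (Finset.subset_insert a s), hMB⟩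

/-- Let `L` be an intermediate field of `K(t)/K(f)` with partition `P_L`, and let
`A` be the part of `P_L` containing the index `1` (of `F_1 = x − t`).  Then the
`P_L`-product `g := ∏_{j ∈ A} F_j ∈ L[x]` is the minimal polynomial of `t` over `L`. -/
theorem stmt_17 {K : Type*} [Field K] (f : RatFunc K) (hf : Nonconst f)
    (hmonic : (Phi f).Monic) (hsep : (Phi f).Separable)
    (r : ℕ) (hr : 0 < r) (F : Fin r → Polynomial (RatFunc K))
    (hFm : ∀ j, (F j).Monic) (hFirr : ∀ j, Irreducible (F j))
    (hfact : Phi f = ∏ j, F j)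
    (hF1 : F ⟨0, hr⟩ = Polynomial.X - Polynomial.C RatFunc.X)
    (L : IntermediateField K (RatFunc K)) (hL : IntermediateField.adjoin K {f} ≤ L)
    (P : Finpartition (Finset.univ : Finset (Fin r)))
    (hP : IsPartitionOf F (L : Set (RatFunc K)) P)
    (A : Finset (Fin r)) (hA : A ∈ P.parts) (h1 : (⟨0, hr⟩ : Fin r) ∈ A) :
    (minpoly L (RatFunc.X : RatFunc K)).map (algebraMap L (RatFunc K)) = ∏ j ∈ A, F j := by
  classical
  set t : RatFunc K := RatFunc.X with ht
  -- the product over A lifts to L[x]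
  have hcoeff : ∀ m, (∏ j ∈ A, F j).coeff m ∈ (L : Set (RatFunc K)) := hP.1 A hA
  have hlift : (∏ j ∈ A, F j) ∈ Polynomial.lifts (algebraMap L (RatFunc K)) := by
    rw [Polynomial.lifts_iff_coeff_lifts]
    exact fun n => ⟨⟨_, hcoeff n⟩, rfl⟩
  have hgmonic : (∏ j ∈ A, F j).Monic :=
    Polynomial.monic_prod_of_monic _ _ (fun j _ => hFm j)
  obtain ⟨g', hg'map, -, hg'monic⟩ := Polynomial.lifts_and_degree_eq_and_monic hlift hgmonic
  -- t is a root
  have hroot : Polynomial.aeval t g' = 0 := by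
    rw [Polynomial.aeval_def, ← Polynomial.eval_map, hg'map, Polynomial.eval_prod]
    exact Finset.prod_eq_zero h1 (by simp [hF1])
  have hint : IsIntegral L t := ⟨g', hg'monic, hroot⟩
  have hdvd : minpoly L t ∣ g' := minpoly.dvd L t hroot
  set M := (minpoly L t).map (algebraMap L (RatFunc K)) with hM
  have hMdvd : M ∣ ∏ j ∈ A, F j := by
    rw [← hg'map]; exact Polynomial.map_dvd _ hdvd
  have hMmonic : M.Monic := (minpoly.monic hint).map _
  have hΦsq : Squarefree (Phi f) := hsep.squarefree
  have hgdvdΦ : (∏ j ∈ A, F j) ∣ Phi f := by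
    rw [hfact]
    exact Finset.prod_dvd_prod_of_subset A Finset.univ F (Finset.subset_univ A)
  have hgsq : Squarefree (∏ j ∈ A, F j) := hΦsq.squarefree_of_dvd hgdvdΦ
  obtain ⟨B, hBA, hMB⟩ := aux_dvd_prod hFm hFirr A M hMmonic hgsq hMdvd
  -- F is injective
  have hFinj : Function.Injective F := by
    intro i j hij
    by_contra hne
    have hdvd2 : F i * F i ∣ Phi f := by
      rw [hfact]
      calc F i * F i = ∏ k ∈ ({i, j} : Finset (Fin r)), F k := by
            rw [Finset.prod_pair hne, hij]
        _ ∣ _ := Finset.prod_dvd_prod_of_subset _ _ F (Finset.subset_univ _)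
    exact (hFirr i).not_isUnit (hΦsq _ hdvd2)
  -- the index of X - C t lies in B
  have hprime : Prime (Polynomial.X - Polynomial.C t) := Polynomial.prime_X_sub_C t
  have hXt : (Polynomial.X - Polynomial.C t) ∣ M := by
    rw [Polynomial.dvd_iff_isRoot, Polynomial.IsRoot, hM, Polynomial.eval_map,
      ← Polynomial.aeval_def, minpoly.aeval]
  obtain ⟨j, hjB, hjdvd⟩ := hprime.exists_mem_finset_dvd (hMB ▸ hXt)
  have hFj : F j = Polynomial.X - Polynomial.C t :=
    (Polynomial.eq_of_monic_of_associated (Polynomial.monic_X_sub_C t) (hFm j)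
      (hprime.irreducible.associated_of_dvd (hFirr j) hjdvd)).symm
  have hj0B : (⟨0, hr⟩ : Fin r) ∈ B := by
    have : j = ⟨0, hr⟩ := hFinj (by rw [hFj, hF1])
    rwa [← this]
  -- main claim : B = A
  have hBeqA : B = A := by
    by_contra hne
    have hssub : B ⊂ A := hBA.ssubset_of_ne hne
    have hBne : B.Nonempty := ⟨_, hj0B⟩
    have hABne : (A \ B).Nonempty := by
      obtain ⟨x, hxA, hxB⟩ := Finset.exists_of_ssubset hssub
      exact ⟨x, Finset.mem_sdiff.mpr ⟨hxA, hxB⟩⟩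
    -- the complementary product lifts to L[x]
    obtain ⟨c', hc'⟩ := hdvd
    have hmapc : (∏ j ∈ A \ B, F j) = c'.map (algebraMap L (RatFunc K)) := by
      have hMne : M ≠ 0 := hMmonic.ne_zero
      refine mul_left_cancel₀ hMne ?_
      rw [hM, ← Polynomial.map_mul, ← hc', hg'map, ← hM, hMB, mul_comm,
        Finset.prod_sdiff hBA]
    -- build the refined partition
    have hdisjA : ∀ C ∈ P.parts.erase A, Disjoint A C := fun C hC =>
      P.disjoint hA (Finset.mem_coe.mpr (Finset.mem_of_mem_erase hC))
        (Ne.symm (Finset.ne_of_mem_erase hC))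
    have hBnotmem : B ∉ P.parts.erase A := by
      intro hB
      have : B = ⊥ := Disjoint.eq_bot_of_le ((hdisjA B hB).symm) hBA
      simpa [this] using hBne
    have hABnotmem : (A \ B) ∉ P.parts.erase A := by
      intro hB
      have : A \ B = ⊥ :=
        Disjoint.eq_bot_of_le ((hdisjA _ hB).symm) (Finset.sdiff_subset)
      simpa [this] using hABne
    have hBneAB : B ≠ A \ B := by
      intro h
      have := Finset.mem_sdiff.mp (h ▸ hj0B)
      exact this.2 hj0B
    set parts' : Finset (Finset (Fin r)) := insert B (insert (A \ B) (P.parts.erase A))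
      with hparts'
    have hmem' : ∀ C ∈ parts', C = B ∨ C = A \ B ∨ C ∈ P.parts.erase A := by
      intro C hC
      simpa [hparts'] using hC
    have hsupIndep : parts'.SupIndep id := by
      rw [Finset.supIndep_iff_pairwiseDisjoint]
      intro x hx y hy hxy
      rcases hmem' x (Finset.mem_coe.mp hx) with hx' | hx' | hx' <;>
        rcases hmem' y (Finset.mem_coe.mp hy) with hy' | hy' | hy'
      · exact absurd (hx'.trans hy'.symm) hxy
      · subst hx'; subst hy'
        exact Finset.disjoint_sdiff
      · subst hx'; exact (hdisjA y hy').mono_left hBA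
      · subst hx'; subst hy'
        exact Finset.sdiff_disjoint
      · exact absurd (hx'.trans hy'.symm) hxy
      · subst hx'; exact (hdisjA y hy').mono_left Finset.sdiff_subset
      · subst hy'; exact ((hdisjA x hx').mono_left hBA).symm
      · subst hy'; exact ((hdisjA x hx').mono_left Finset.sdiff_subset).symm
      · exact P.disjoint (Finset.mem_coe.mpr (Finset.mem_of_mem_erase hx'))
          (Finset.mem_coe.mpr (Finset.mem_of_mem_erase hy')) hxy
    have hsup : parts'.sup id = (Finset.univ : Finset (Fin r)) := by
      rw [hparts', Finset.sup_insert, Finset.sup_insert, ← sup_assoc]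
      have h1' : (id B ⊔ id (A \ B) : Finset (Fin r)) = A := by
        simp only [id]
        exact Finset.union_sdiff_of_subset hBA
      rw [h1']
      have : (A ⊔ (P.parts.erase A).sup id : Finset (Fin r))
          = (insert A (P.parts.erase A)).sup id := by
        rw [Finset.sup_insert]; rfl
      rw [this, Finset.insert_erase hA, P.sup_parts]
    have hnotbot : ⊥ ∉ parts' := by
      intro hbot
      rcases hmem' ⊥ hbot with h' | h' | h'
      · exact hBne.ne_empty (by simpa using h'.symm)
      · exact hABne.ne_empty (by simpa using h'.symm)
      · exact P.bot_notMem (Finset.mem_of_mem_erase h')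
    set Q : Finpartition (Finset.univ : Finset (Fin r)) :=
      ⟨parts', hsupIndep, hsup, hnotbot⟩ with hQ
    have hQprods : ProdsIn F (L : Set (RatFunc K)) Q := by
      intro C hC m
      rcases hmem' C hC with h' | h' | h'
      · subst h'
        rw [← hMB, hM, Polynomial.coeff_map]
        exact SetLike.coe_mem _
      · subst h'
        rw [hmapc, Polynomial.coeff_map]
        exact SetLike.coe_mem _
      · exact hP.1 C (Finset.mem_of_mem_erase h') m
    have hcardQ : Q.parts.card = P.parts.card + 1 := by
      have hc1 : parts'.card = (insert (A \ B) (P.parts.erase A)).card + 1 :=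
        Finset.card_insert_of_notMem (by
          simp only [Finset.mem_insert]
          push_neg
          exact ⟨hBneAB, hBnotmem⟩)
      have hc2 : (insert (A \ B) (P.parts.erase A)).card = (P.parts.erase A).card + 1 :=
        Finset.card_insert_of_notMem hABnotmem
      have hc3 : (P.parts.erase A).card = P.parts.card - 1 := Finset.card_erase_of_mem hA
      have hpos : 0 < P.parts.card := Finset.card_pos.mpr ⟨A, hA⟩
      show parts'.card = P.parts.card + 1
      omega
    have := hP.2 Q hQprods
    omega
  rw [hM] at hMB ⊢
  rw [hMB, hBeqA]
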